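/- Let T ∈ L(H)^d be a pure K-contraction. Then the canonical K-dilation j : H → H_K(𝒟), j(x) = Σ_α a_{|α|}γ_α (CT^{*α}x) z^α, is minimal: the only closed subspace of H_K(𝒟) reducing for M_z and containing Im j is H_K(𝒟) itself. -/

import Mathlib

open Filter Topology
open scoped InnerProductSpace

namespace Stmt16Aux

variable {d : ℕ} {𝒟 HK : Type*}
    [NormedAddCommGroup 𝒟] [InnerProductSpace ℂ 𝒟] [CompleteSpace 𝒟]
    [NormedAddCommGroup HK] [InnerProductSpace ℂ HK] [CompleteSpace HK]

variable (a : ℕ → ℝ) (ev : EuclideanSpace ℂ (Fin d) → (HK →L[ℂ] 𝒟))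
variable (Mz : Fin d → HK →L[ℂ] HK)

/-- reproducing property of the kernel vectors `(ev w)† x`. -/
lemma kv_inner (w : EuclideanSpace ℂ (Fin d)) (x : 𝒟) (g : HK) :
    ⟪(ev w).adjoint x, g⟫_ℂ = ⟪x, ev w g⟫_ℂ :=
  ContinuousLinearMap.adjoint_inner_left (ev w) g x

lemma hasSum_inner_kv
    (hkernel : ∀ z w : EuclideanSpace ℂ (Fin d), ‖z‖ < 1 → ‖w‖ < 1 → ∀ x : 𝒟,
      HasSum (fun n => ((a n : ℂ) * ⟪w, z⟫_ℂ ^ n) • x) (ev z ((ev w).adjoint x)))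
    (u w : EuclideanSpace ℂ (Fin d)) (hu : ‖u‖ < 1) (hw : ‖w‖ < 1) (x y : 𝒟) :
    HasSum (fun n => (a n : ℂ) * ⟪w, u⟫_ℂ ^ n * ⟪y, x⟫_ℂ)
      ⟪y, ev u ((ev w).adjoint x)⟫_ℂ := by
  have h := (innerSL ℂ y).hasSum (hkernel u w hu hw x)
  simpa [inner_smul_right] using h

lemma ev_kv_zero (ha0 : a 0 = 1)
    (hkernel : ∀ z w : EuclideanSpace ℂ (Fin d), ‖z‖ < 1 → ‖w‖ < 1 → ∀ x : 𝒟,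
      HasSum (fun n => ((a n : ℂ) * ⟪w, z⟫_ℂ ^ n) • x) (ev z ((ev w).adjoint x)))
    (u : EuclideanSpace ℂ (Fin d)) (hu : ‖u‖ < 1) (x : 𝒟) :
    ev u ((ev (0 : EuclideanSpace ℂ (Fin d))).adjoint x) = x := by
  have h0 : ‖(0 : EuclideanSpace ℂ (Fin d))‖ < 1 := by simpa using one_pos
  have h := hkernel u 0 hu h0 x
  have hz : ⟪(0 : EuclideanSpace ℂ (Fin d)), u⟫_ℂ = 0 := inner_zero_left u
  have h2 : HasSum (fun n => ((a n : ℂ) * ⟪(0 : EuclideanSpace ℂ (Fin d)), u⟫_ℂ ^ n) • x) x := by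
    have hs := hasSum_single
      (f := fun n => ((a n : ℂ) * ⟪(0 : EuclideanSpace ℂ (Fin d)), u⟫_ℂ ^ n) • x) 0
      (by intro n hn; simp [hz, zero_pow hn])
    simpa [hz, ha0] using hs
  exact h.unique h2

lemma summable_pow (hapos : ∀ n, 0 < a n)
    (hkernel : ∀ z w : EuclideanSpace ℂ (Fin d), ‖z‖ < 1 → ‖w‖ < 1 → ∀ x : 𝒟,
      HasSum (fun n => ((a n : ℂ) * ⟪w, z⟫_ℂ ^ n) • x) (ev z ((ev w).adjoint x)))
    (x0 : 𝒟) (hx0 : x0 ≠ 0) (z0 : EuclideanSpace ℂ (Fin d)) (hz0 : z0 ≠ 0)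
    {t : ℝ} (ht0 : 0 ≤ t) (ht1 : t < 1) :
    Summable (fun n => a n * t ^ n) := by
  rcases eq_or_lt_of_le ht0 with h | h
  · apply summable_of_ne_finset_zero (s := {0})
    intro n hn
    rw [← h]
    simp [zero_pow (by simpa using hn)]
  · set e : EuclideanSpace ℂ (Fin d) := ((‖z0‖⁻¹ : ℝ) : ℂ) • z0 with he
    have hz0n : ‖z0‖ ≠ 0 := norm_ne_zero_iff.mpr hz0
    have hne : ‖e‖ = 1 := by
      rw [he, norm_smul]
      simp only [Complex.norm_real, Real.norm_eq_abs, abs_of_nonneg (inv_nonneg.mpr (norm_nonneg z0))]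
      exact inv_mul_cancel₀ hz0n
    set w : EuclideanSpace ℂ (Fin d) := ((Real.sqrt t : ℝ) : ℂ) • e with hwdef
    have hsq : Real.sqrt t < 1 := by
      rw [show (1:ℝ) = Real.sqrt 1 by simp]
      exact Real.sqrt_lt_sqrt ht0 ht1
    have hwn : ‖w‖ < 1 := by
      rw [hwdef, norm_smul]
      simp only [Complex.norm_real, Real.norm_eq_abs, abs_of_nonneg (Real.sqrt_nonneg t), hne,
        mul_one]
      exact hsq
    have hww : ⟪w, w⟫_ℂ = (t : ℂ) := by
      rw [hwdef, inner_smul_left, inner_smul_right, inner_self_eq_norm_sq_to_K, hne,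
        Complex.conj_ofReal]
      push_cast
      rw [one_pow, mul_one, ← Complex.ofReal_mul, Real.mul_self_sqrt ht0]
    have h2 := hasSum_inner_kv a ev hkernel w w hwn hwn x0 x0
    rw [hww] at h2
    have hx : ⟪x0, x0⟫_ℂ ≠ 0 := inner_self_ne_zero.mpr hx0
    have hsc : Summable (fun n => ((a n * t ^ n : ℝ) : ℂ)) := by
      have h3 := h2.summable.mul_right (⟪x0, x0⟫_ℂ)⁻¹
      have h4 : (fun n => (a n : ℂ) * (t:ℂ) ^ n * ⟪x0, x0⟫_ℂ * (⟪x0, x0⟫_ℂ)⁻¹)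
          = fun n => ((a n * t ^ n : ℝ) : ℂ) := by
        funext n
        rw [mul_assoc, mul_assoc, mul_inv_cancel₀ hx]
        push_cast
        ring
      rwa [h4] at h3
    exact Complex.summable_ofReal.mp hsc


lemma norm_kv_le
    (hapos : ∀ n, 0 < a n)
    (hkernel : ∀ z w : EuclideanSpace ℂ (Fin d), ‖z‖ < 1 → ‖w‖ < 1 → ∀ x : 𝒟,
      HasSum (fun n => ((a n : ℂ) * ⟪w, z⟫_ℂ ^ n) • x) (ev z ((ev w).adjoint x)))
    (w : EuclideanSpace ℂ (Fin d)) (hw1 : ‖w‖ < 1) (x : 𝒟) (r : ℝ)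
    (hwr : ‖w‖ ≤ r) (hsr : Summable fun n => a n * (r ^ 2) ^ n) :
    ‖(ev w).adjoint x‖ ≤ Real.sqrt (∑' n, a n * (r ^ 2) ^ n) * ‖x‖ := by
  have hk := hasSum_inner_kv a ev hkernel w w hw1 hw1 x x
  have hterm : ∀ n, (a n : ℂ) * ⟪w, w⟫_ℂ ^ n * ⟪x, x⟫_ℂ
      = ((a n * (‖w‖ ^ 2) ^ n * ‖x‖ ^ 2 : ℝ) : ℂ) := by
    intro n
    rw [inner_self_eq_norm_sq_to_K, inner_self_eq_norm_sq_to_K]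
    rw [show ((a n * (‖w‖ ^ 2) ^ n * ‖x‖ ^ 2 : ℝ) : ℂ)
        = RCLike.ofReal (K := ℂ) (a n * (‖w‖ ^ 2) ^ n * ‖x‖ ^ 2) from rfl]
    rw [show ((a n : ℝ) : ℂ) = RCLike.ofReal (K := ℂ) (a n) from rfl]
    simp only [RCLike.ofReal_mul, RCLike.ofReal_pow]
  simp only [hterm] at hk
  have hs' : Summable fun n => a n * (‖w‖ ^ 2) ^ n := by
    apply Summable.of_nonneg_of_le (fun n => mul_nonneg (hapos n).le (by positivity))
      (fun n => ?_) hsr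
    have h1 : ‖w‖ ^ 2 ≤ r ^ 2 := by
      apply pow_le_pow_left₀ (norm_nonneg w) hwr
    exact mul_le_mul_of_nonneg_left (pow_le_pow_left₀ (by positivity) h1 n) (hapos n).le
  have hreal : HasSum (fun n => a n * (‖w‖ ^ 2) ^ n * ‖x‖ ^ 2)
      ((∑' n, a n * (‖w‖ ^ 2) ^ n) * ‖x‖ ^ 2) := hs'.hasSum.mul_right _
  have hcast := (Complex.hasSum_ofReal).mpr hreal
  have heq : ⟪x, ev w ((ev w).adjoint x)⟫_ℂ
      = (((∑' n, a n * (‖w‖ ^ 2) ^ n) * ‖x‖ ^ 2 : ℝ) : ℂ) := hk.unique hcast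
  have hnorm : ‖(ev w).adjoint x‖ ^ 2 = (∑' n, a n * (‖w‖ ^ 2) ^ n) * ‖x‖ ^ 2 := by
    have h1 : RCLike.re ⟪(ev w).adjoint x, (ev w).adjoint x⟫_ℂ = ‖(ev w).adjoint x‖ ^ 2 :=
      inner_self_eq_norm_sq _
    rw [← h1, kv_inner, heq]
    rfl
  have hsle : (∑' n, a n * (‖w‖ ^ 2) ^ n) ≤ ∑' n, a n * (r ^ 2) ^ n := by
    apply Summable.tsum_le_tsum (fun n => ?_) hs' hsr
    have h1 : ‖w‖ ^ 2 ≤ r ^ 2 := pow_le_pow_left₀ (norm_nonneg w) hwr 2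
    exact mul_le_mul_of_nonneg_left (pow_le_pow_left₀ (by positivity) h1 n) (hapos n).le
  have h2 : ‖(ev w).adjoint x‖ ^ 2 ≤ (∑' n, a n * (r ^ 2) ^ n) * ‖x‖ ^ 2 := by
    rw [hnorm]
    exact mul_le_mul_of_nonneg_right hsle (by positivity)
  have hS0 : 0 ≤ ∑' n, a n * (r ^ 2) ^ n :=
    tsum_nonneg fun n => mul_nonneg (hapos n).le (by positivity)
  have h3 := Real.sqrt_le_sqrt h2
  rw [Real.sqrt_sq (norm_nonneg _)] at h3
  rwa [Real.sqrt_mul hS0, Real.sqrt_sq (norm_nonneg x)] at h3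

/-- the operator `g ↦ Σ_i conj (w i) • Mz i g`. -/
noncomputable def Mb (w : EuclideanSpace ℂ (Fin d)) : HK →L[ℂ] HK :=
  ∑ i, (starRingEnd ℂ (w i)) • Mz i

lemma ev_Mb (hMz : ∀ (i) (z : EuclideanSpace ℂ (Fin d)), ‖z‖ < 1 → ∀ f, ev z (Mz i f) = z i • ev z f)
    (w u : EuclideanSpace ℂ (Fin d)) (hu : ‖u‖ < 1) (g : HK) :
    ev u (Mb Mz w g) = ⟪w, u⟫_ℂ • ev u g := by
  have : ev u (Mb Mz w g) = ∑ i, (starRingEnd ℂ (w i)) • (u i • ev u g) := by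
    rw [Mb, ContinuousLinearMap.sum_apply]
    rw [map_sum]
    congr 1
    funext i
    rw [ContinuousLinearMap.smul_apply, map_smul, hMz i u hu g]
  rw [this, PiLp.inner_apply]
  simp only [RCLike.inner_apply, smul_smul]
  rw [Finset.sum_smul]
  exact Finset.sum_congr rfl fun i _ => by rw [mul_comm]

lemma ev_Mb_pow
    (hMz : ∀ (i) (z : EuclideanSpace ℂ (Fin d)), ‖z‖ < 1 → ∀ f, ev z (Mz i f) = z i • ev z f)
    (w u : EuclideanSpace ℂ (Fin d)) (hu : ‖u‖ < 1) (g : HK) (n : ℕ) :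
    ev u ((Mb Mz w ^ n) g) = ⟪w, u⟫_ℂ ^ n • ev u g := by
  induction n generalizing g with
  | zero => simp
  | succ n ih =>
    rw [pow_succ, ContinuousLinearMap.mul_apply, ih (Mb Mz w g), ev_Mb ev Mz hMz w u hu,
      smul_smul, pow_succ]

lemma norm_Mb_apply_le (w : EuclideanSpace ℂ (Fin d)) (g : HK) :
    ‖Mb Mz w g‖ ≤ ((∑ i, ‖Mz i‖) * ‖w‖) * ‖g‖ := by
  have hcoord : ∀ i, ‖w i‖ ≤ ‖w‖ := by
    intro i
    have h1 : ‖w i‖ ^ 2 ≤ ∑ j, ‖w j‖ ^ 2 := by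
      apply Finset.single_le_sum (f := fun j => ‖w j‖ ^ 2) (fun j _ => by positivity)
        (Finset.mem_univ i)
    have h2 := Real.sqrt_le_sqrt h1
    rw [Real.sqrt_sq (norm_nonneg _)] at h2
    rwa [EuclideanSpace.norm_eq]
  rw [Mb, ContinuousLinearMap.sum_apply]
  refine (norm_sum_le _ _).trans ?_
  rw [Finset.sum_mul, Finset.sum_mul]
  apply Finset.sum_le_sum
  intro i _
  rw [ContinuousLinearMap.smul_apply, norm_smul]
  have h1 : ‖(starRingEnd ℂ) (w i)‖ = ‖w i‖ := by simp
  rw [h1]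
  calc ‖w i‖ * ‖Mz i g‖ ≤ ‖w‖ * (‖Mz i‖ * ‖g‖) := by
        apply mul_le_mul (hcoord i) ((Mz i).le_opNorm g) (norm_nonneg _) (norm_nonneg _)
    _ = ‖Mz i‖ * ‖w‖ * ‖g‖ := by ring

lemma norm_Mb_pow_le (w : EuclideanSpace ℂ (Fin d)) (g : HK) (n : ℕ) :
    ‖(Mb Mz w ^ n) g‖ ≤ ((∑ i, ‖Mz i‖) * ‖w‖) ^ n * ‖g‖ := by
  induction n with
  | zero => simp
  | succ n ih =>
    rw [pow_succ', ContinuousLinearMap.mul_apply]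
    calc ‖Mb Mz w ((Mb Mz w ^ n) g)‖ ≤ ((∑ i, ‖Mz i‖) * ‖w‖) * ‖(Mb Mz w ^ n) g‖ :=
          norm_Mb_apply_le Mz w _
      _ ≤ ((∑ i, ‖Mz i‖) * ‖w‖) * (((∑ i, ‖Mz i‖) * ‖w‖) ^ n * ‖g‖) := by
          apply mul_le_mul_of_nonneg_left ih
          positivity
      _ = ((∑ i, ‖Mz i‖) * ‖w‖) ^ (n + 1) * ‖g‖ := by ring


lemma hasSum_mem_closed {K : Submodule ℂ HK} (hK : IsClosed (K : Set HK)) {f : ℕ → HK} {S : HK}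
    (h : HasSum f S) (hf : ∀ n, f n ∈ K) : S ∈ K :=
  hK.mem_of_tendsto h (Filter.Eventually.of_forall fun s => Submodule.sum_mem _ fun n _ => hf n)

lemma kv_expand (ha0 : a 0 = 1) (hapos : ∀ n, 0 < a n)
    (hsep : ∀ f : HK, (∀ z, ‖z‖ < 1 → ev z f = 0) → f = 0)
    (hkernel : ∀ z w : EuclideanSpace ℂ (Fin d), ‖z‖ < 1 → ‖w‖ < 1 → ∀ x : 𝒟,
      HasSum (fun n => ((a n : ℂ) * ⟪w, z⟫_ℂ ^ n) • x) (ev z ((ev w).adjoint x)))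
    (hMz : ∀ (i) (z : EuclideanSpace ℂ (Fin d)), ‖z‖ < 1 → ∀ f, ev z (Mz i f) = z i • ev z f)
    (w : EuclideanSpace ℂ (Fin d)) (hw1 : ‖w‖ < 1) (x : 𝒟)
    (hsum : Summable fun n => a n * ((∑ i, ‖Mz i‖) * ‖w‖) ^ n) :
    HasSum (fun n => (a n : ℂ) • ((Mb Mz w ^ n) ((ev (0 : EuclideanSpace ℂ (Fin d))).adjoint x)))
      ((ev w).adjoint x) := by
  set k0 := (ev (0 : EuclideanSpace ℂ (Fin d))).adjoint x with hk0
  have hnorm : ∀ n, ‖(a n : ℂ) • ((Mb Mz w ^ n) k0)‖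
      ≤ (a n * ((∑ i, ‖Mz i‖) * ‖w‖) ^ n) * ‖k0‖ := by
    intro n
    rw [norm_smul]
    have h1 : ‖((a n : ℝ) : ℂ)‖ = a n := by
      rw [Complex.norm_real, Real.norm_eq_abs, abs_of_pos (hapos n)]
    rw [h1, mul_assoc]
    exact mul_le_mul_of_nonneg_left (norm_Mb_pow_le Mz w k0 n) (hapos n).le
  have hsf : Summable (fun n => (a n : ℂ) • ((Mb Mz w ^ n) k0)) := by
    apply Summable.of_norm
    exact Summable.of_nonneg_of_le (fun n => norm_nonneg _) hnorm (hsum.mul_right ‖k0‖)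
  have hY := hsf.hasSum
  set Y := ∑' n, (a n : ℂ) • ((Mb Mz w ^ n) k0) with hYdef
  suffices h : Y = (ev w).adjoint x by rwa [h] at hY
  have hev : ∀ u : EuclideanSpace ℂ (Fin d), ‖u‖ < 1 → ev u Y = ev u ((ev w).adjoint x) := by
    intro u hu
    have h1 := (ev u).hasSum hY
    have h1' : HasSum (fun n => ((a n : ℂ) * ⟪w, u⟫_ℂ ^ n) • x) (ev u Y) := by
      have heq : (fun n => ev u ((a n : ℂ) • ((Mb Mz w ^ n) k0)))
          = fun n => ((a n : ℂ) * ⟪w, u⟫_ℂ ^ n) • x := by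
        funext n
        rw [map_smul, ev_Mb_pow ev Mz hMz w u hu k0 n,
          ev_kv_zero a ev ha0 hkernel u hu x, smul_smul]
      rwa [heq] at h1
    exact h1'.unique (hkernel u w hu hw1 x)
  have hzero := hsep (Y - (ev w).adjoint x) (fun u hu => by rw [map_sub, hev u hu, sub_self])
  exact sub_eq_zero.mp hzero


lemma analytic_ext (ha0 : a 0 = 1) (hapos : ∀ n, 0 < a n)
    (hsep : ∀ f : HK, (∀ z, ‖z‖ < 1 → ev z f = 0) → f = 0)
    (hkernel : ∀ z w : EuclideanSpace ℂ (Fin d), ‖z‖ < 1 → ‖w‖ < 1 → ∀ x : 𝒟,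
      HasSum (fun n => ((a n : ℂ) * ⟪w, z⟫_ℂ ^ n) • x) (ev z ((ev w).adjoint x)))
    (x0 : 𝒟) (hx0 : x0 ≠ 0) {δ : ℝ} (hδ : 0 < δ) (g : HK)
    (hg : ∀ w : EuclideanSpace ℂ (Fin d), ‖w‖ < δ → ev w g = 0) :
    ∀ z : EuclideanSpace ℂ (Fin d), ‖z‖ < 1 → ev z g = 0 := by
  intro z hz1
  by_cases hz0 : z = 0
  · exact hg z (by rw [hz0]; simpa using hδ)
  have hzpos : (0 : ℝ) < ‖z‖ := norm_pos_iff.mpr hz0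
  set R : ℝ := ‖z‖⁻¹ with hRdef
  have hR0 : 0 < R := by positivity
  have hR1 : 1 < R := (one_lt_inv₀ hzpos).mpr hz1
  set Ω : Set ℂ := Metric.ball 0 R with hΩdef
  have hΩo : IsOpen Ω := Metric.isOpen_ball
  have hmemΩ : ∀ t : ℂ, t ∈ Ω ↔ ‖t‖ < R := by
    intro t; rw [hΩdef, Metric.mem_ball, dist_zero_right]
  have hsmallz : ∀ t : ℂ, t ∈ Ω → ‖t • z‖ < 1 := by
    intro t ht
    rw [norm_smul]
    have h1 : ‖t‖ < R := (hmemΩ t).mp ht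
    calc ‖t‖ * ‖z‖ < R * ‖z‖ := mul_lt_mul_of_pos_right h1 hzpos
      _ = 1 := inv_mul_cancel₀ hzpos.ne'
  have hsumm : ∀ t : ℝ, 0 ≤ t → t < 1 → Summable (fun n => a n * t ^ n) := fun t h0 h1 =>
    summable_pow a ev hapos hkernel x0 hx0 z hz0 h0 h1
  -- density of the span of kernel vectors
  set V : Submodule ℂ HK :=
    Submodule.span ℂ {v | ∃ w : EuclideanSpace ℂ (Fin d), ∃ y : 𝒟, ‖w‖ < 1 ∧ v = (ev w).adjoint y}
    with hVdef
  have hVdense : Dense (V : Set HK) := by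
    rw [Submodule.dense_iff_topologicalClosure_eq_top]
    rw [Submodule.topologicalClosure_eq_top_iff]
    rw [Submodule.eq_bot_iff]
    intro f hf
    apply hsep
    intro u hu
    apply ext_inner_left ℂ
    intro y
    rw [inner_zero_right, ← kv_inner ev u y f]
    exact hf ((ev u).adjoint y) (Submodule.subset_span ⟨u, y, hu, rfl⟩)
  suffices hI : ∀ x : 𝒟, ⟪x, ev z g⟫_ℂ = 0 by
    apply ext_inner_left ℂ
    intro y
    rw [hI y, inner_zero_right]
  intro x
  set φ : ℂ → ℂ := fun t => ⟪x, ev (t • z) g⟫_ℂ with hφdef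
  obtain ⟨gs, hgsV, hgs⟩ := mem_closure_iff_seq_limit.mp (hVdense g)
  set Φ : ℕ → ℂ → ℂ := fun m t => ⟪x, ev (t • z) (gs m)⟫_ℂ with hΦdef
  -- each function attached to an element of V is differentiable on Ω
  have hGen : ∀ v ∈ V, DifferentiableOn ℂ (fun t => ⟪x, ev (t • z) v⟫_ℂ) Ω := by
    intro v hv
    induction hv using Submodule.span_induction with
    | mem v hvs =>
      obtain ⟨u, y, hu1, rfl⟩ := hvs
      set cc : ℕ → ℂ := fun n => (a n : ℂ) * ⟪u, z⟫_ℂ ^ n * ⟪x, y⟫_ℂ with hccdef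
      have hEq : ∀ t ∈ Ω, ⟪x, ev (t • z) ((ev u).adjoint y)⟫_ℂ = ∑' n, cc n * t ^ n := by
        intro t ht
        have h := hasSum_inner_kv a ev hkernel (t • z) u (hsmallz t ht) hu1 y x
        have h2 : HasSum (fun n => cc n * t ^ n) ⟪x, ev (t • z) ((ev u).adjoint y)⟫_ℂ := by
          have heq : (fun n => (a n : ℂ) * ⟪u, t • z⟫_ℂ ^ n * ⟪x, y⟫_ℂ)
              = fun n => cc n * t ^ n := by
            funext n
            rw [inner_smul_right, mul_pow, hccdef]
            ring
          rwa [heq] at h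
        exact h2.tsum_eq.symm
      have hψ : DifferentiableOn ℂ (fun t => ∑' n, cc n * t ^ n) Ω := by
        have hTU : TendstoLocallyUniformlyOn (fun (s : Finset ℕ) t => ∑ n ∈ s, cc n * t ^ n)
            (fun t => ∑' n, cc n * t ^ n) atTop Ω := by
          apply (tendstoLocallyUniformlyOn_iff_forall_isCompact hΩo).mpr
          intro K hKΩ hKc
          rcases K.eq_empty_or_nonempty with rfl | hKne
          · intro uset huset
            simp
          obtain ⟨t0, ht0K, ht0⟩ := hKc.exists_isMaxOn hKne continuous_norm.continuousOn
          have hρ : ‖t0‖ * ‖z‖ < 1 := by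
            have := hsmallz t0 (hKΩ ht0K)
            rwa [norm_smul] at this
          have hρ0 : 0 ≤ ‖t0‖ * ‖z‖ := by positivity
          apply tendstoUniformlyOn_tsum
            (u := fun n => (a n * (‖t0‖ * ‖z‖) ^ n) * (‖x‖ * ‖y‖))
          · exact (hsumm _ hρ0 hρ).mul_right _
          · intro n t htK
            have ht : ‖t‖ ≤ ‖t0‖ := ht0 htK
            have h1 : ‖cc n * t ^ n‖ = a n * ‖⟪u, z⟫_ℂ‖ ^ n * ‖⟪x, y⟫_ℂ‖ * ‖t‖ ^ n := by
              rw [norm_mul, norm_pow, hccdef, norm_mul, norm_mul, norm_pow, Complex.norm_real,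
                Real.norm_eq_abs, abs_of_pos (hapos n)]
            rw [h1]
            have h2 : ‖⟪u, z⟫_ℂ‖ ≤ ‖z‖ := by
              calc ‖⟪u, z⟫_ℂ‖ ≤ ‖u‖ * ‖z‖ := norm_inner_le_norm u z
                _ ≤ 1 * ‖z‖ := mul_le_mul_of_nonneg_right hu1.le (norm_nonneg z)
                _ = ‖z‖ := one_mul _
            have h3 : ‖⟪x, y⟫_ℂ‖ ≤ ‖x‖ * ‖y‖ := norm_inner_le_norm x y
            calc a n * ‖⟪u, z⟫_ℂ‖ ^ n * ‖⟪x, y⟫_ℂ‖ * ‖t‖ ^ n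
                = a n * (‖⟪u, z⟫_ℂ‖ * ‖t‖) ^ n * ‖⟪x, y⟫_ℂ‖ := by ring
              _ ≤ a n * (‖z‖ * ‖t0‖) ^ n * (‖x‖ * ‖y‖) := by
                  apply mul_le_mul ?_ h3 (norm_nonneg _) ?_
                  · apply mul_le_mul_of_nonneg_left ?_ (hapos n).le
                    apply pow_le_pow_left₀ (by positivity)
                    exact mul_le_mul h2 ht (norm_nonneg t) (norm_nonneg z)
                  · exact mul_nonneg (hapos n).le (by positivity)
              _ = a n * (‖t0‖ * ‖z‖) ^ n * (‖x‖ * ‖y‖) := by ring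
        apply hTU.differentiableOn ?_ hΩo
        apply Filter.Eventually.of_forall
        intro s
        apply Differentiable.differentiableOn
        apply Differentiable.fun_sum
        intro n _
        exact (differentiable_pow n).const_mul (cc n)
      exact hψ.congr hEq
    | zero =>
      have heq : (fun t : ℂ => ⟪x, ev (t • z) (0 : HK)⟫_ℂ) = fun _ => 0 := by
        funext t
        rw [map_zero, inner_zero_right]
      rw [heq]
      exact differentiableOn_const 0
    | add v1 v2 hv1 hv2 ih1 ih2 =>
      have heq : (fun t : ℂ => ⟪x, ev (t • z) (v1 + v2)⟫_ℂ)
          = fun t => ⟪x, ev (t • z) v1⟫_ℂ + ⟪x, ev (t • z) v2⟫_ℂ := by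
        funext t
        rw [map_add, inner_add_right]
      rw [heq]
      exact ih1.add ih2
    | smul cc v1 hv1 ih =>
      have heq : (fun t : ℂ => ⟪x, ev (t • z) (cc • v1)⟫_ℂ)
          = fun t => cc * ⟪x, ev (t • z) v1⟫_ℂ := by
        funext t
        rw [map_smul, inner_smul_right]
      rw [heq]
      exact ih.const_mul cc
  have hA : ∀ m, DifferentiableOn ℂ (Φ m) Ω := fun m => hGen (gs m) (hgsV m)
  have hB : TendstoLocallyUniformlyOn Φ φ atTop Ω := by
    apply (tendstoLocallyUniformlyOn_iff_forall_isCompact hΩo).mpr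
    intro K hKΩ hKc
    rcases K.eq_empty_or_nonempty with rfl | hKne
    · intro uset huset
      simp
    obtain ⟨t0, ht0K, ht0⟩ := hKc.exists_isMaxOn hKne continuous_norm.continuousOn
    set r : ℝ := ‖t0‖ * ‖z‖ with hrdef
    have hr1 : r < 1 := by
      have := hsmallz t0 (hKΩ ht0K)
      rwa [norm_smul] at this
    have hr0 : 0 ≤ r := by positivity
    have hsr : Summable (fun n => a n * (r ^ 2) ^ n) := by
      apply hsumm (r ^ 2) (by positivity)
      nlinarith
    set B : ℝ := Real.sqrt (∑' n, a n * (r ^ 2) ^ n) * ‖x‖ + 1 with hBdef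
    have hBpos : 0 < B := by
      have h1 : 0 ≤ Real.sqrt (∑' n, a n * (r ^ 2) ^ n) * ‖x‖ := by positivity
      linarith
    have hbound : ∀ m t, t ∈ K → ‖φ t - Φ m t‖ ≤ B * ‖g - gs m‖ := by
      intro m t htK
      have h1 : φ t - Φ m t = ⟪(ev (t • z)).adjoint x, g - gs m⟫_ℂ := by
        rw [kv_inner, map_sub, inner_sub_right]
      rw [h1]
      calc ‖⟪(ev (t • z)).adjoint x, g - gs m⟫_ℂ‖
          ≤ ‖(ev (t • z)).adjoint x‖ * ‖g - gs m‖ := norm_inner_le_norm _ _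
        _ ≤ B * ‖g - gs m‖ := by
            apply mul_le_mul_of_nonneg_right ?_ (norm_nonneg _)
            have h2 : ‖t • z‖ ≤ r := by
              rw [norm_smul, hrdef]
              exact mul_le_mul_of_nonneg_right (ht0 htK) (norm_nonneg z)
            have h3 := norm_kv_le a ev hapos hkernel (t • z) (hsmallz t (hKΩ htK)) x r h2 hsr
            rw [hBdef]
            linarith
    rw [Metric.tendstoUniformlyOn_iff]
    intro ε hε
    have hgs' : Tendsto (fun m => ‖g - gs m‖) atTop (𝓝 0) := by
      have h1 := tendsto_iff_norm_sub_tendsto_zero.mp hgs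
      have heq : (fun m => ‖g - gs m‖) = fun m => ‖gs m - g‖ := by
        funext m
        rw [norm_sub_rev]
      rw [heq]
      exact h1
    have hev : ∀ᶠ m in atTop, ‖g - gs m‖ < ε / B :=
      hgs'.eventually_lt_const (by positivity)
    filter_upwards [hev] with m hm
    intro t htK
    rw [dist_eq_norm]
    calc ‖φ t - Φ m t‖ ≤ B * ‖g - gs m‖ := hbound m t htK
      _ < B * (ε / B) := by exact mul_lt_mul_of_pos_left hm hBpos
      _ = ε := by field_simp
  have hφd : DifferentiableOn ℂ φ Ω := hB.differentiableOn (Filter.Eventually.of_forall hA) hΩo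
  have hφa : AnalyticOnNhd ℂ φ Ω := hφd.analyticOnNhd hΩo
  have h0Ω : (0 : ℂ) ∈ Ω := (hmemΩ 0).mpr (by simpa using hR0)
  have hev0 : φ =ᶠ[𝓝 (0 : ℂ)] 0 := by
    have hpos : (0 : ℝ) < δ * R := by positivity
    apply Filter.eventuallyEq_of_mem (Metric.ball_mem_nhds (0 : ℂ) hpos)
    intro t ht
    have h1 : ‖t‖ < δ * R := by rwa [Metric.mem_ball, dist_zero_right] at ht
    have h2 : ‖t • z‖ < δ := by
      rw [norm_smul]
      calc ‖t‖ * ‖z‖ < δ * R * ‖z‖ := mul_lt_mul_of_pos_right h1 hzpos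
        _ = δ := by
            rw [hRdef, mul_assoc, inv_mul_cancel₀ hzpos.ne', mul_one]
    show φ t = (0 : ℂ → ℂ) t
    simp only [hφdef, Pi.zero_apply]
    rw [hg (t • z) h2, inner_zero_right]
  have hEqOn := hφa.eqOn_zero_of_preconnected_of_eventuallyEq_zero
    (convex_ball (0 : ℂ) R).isPreconnected h0Ω hev0
  have h1Ω : (1 : ℂ) ∈ Ω := (hmemΩ 1).mpr (by simpa using hR1)
  have := hEqOn h1Ω
  have hfin : ⟪x, ev ((1 : ℂ) • z) g⟫_ℂ = 0 := this
  rwa [one_smul] at hfin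


lemma const_mem (ha0 : a 0 = 1) (hapos : ∀ n, 0 < a n)
    (hsep : ∀ f : HK, (∀ z, ‖z‖ < 1 → ev z f = 0) → f = 0)
    (hkernel : ∀ z w : EuclideanSpace ℂ (Fin d), ‖z‖ < 1 → ‖w‖ < 1 → ∀ x : 𝒟,
      HasSum (fun n => ((a n : ℂ) * ⟪w, z⟫_ℂ ^ n) • x) (ev z ((ev w).adjoint x)))
    (hMz : ∀ (i) (z : EuclideanSpace ℂ (Fin d)), ‖z‖ < 1 → ∀ f, ev z (Mz i f) = z i • ev z f)
    (x0 : 𝒟) (hx0 : x0 ≠ 0) {δ : ℝ} (hδ0 : 0 < δ) (hδ1 : δ < 1)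
    (hsumδ : ∀ w : EuclideanSpace ℂ (Fin d), ‖w‖ < δ →
      Summable (fun n => a n * ((∑ i, ‖Mz i‖) * ‖w‖) ^ n))
    (Msub : Submodule ℂ HK) (hMcl : IsClosed (Msub : Set HK))
    (hred : ∀ i, Submodule.map (Mz i : HK →ₗ[ℂ] HK) Msub ≤ Msub ∧
      Submodule.map ((Mz i).adjoint : HK →ₗ[ℂ] HK) Msub ≤ Msub)
    (v : HK) (hv : v ∈ Msub) :
    (ev (0 : EuclideanSpace ℂ (Fin d))).adjoint (ev (0 : EuclideanSpace ℂ (Fin d)) v)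
      ∈ Msub := by
  classical
  have h0n : ‖(0 : EuclideanSpace ℂ (Fin d))‖ < 1 := by simpa using one_pos
  set Rpre : Submodule ℂ HK := ⨆ i : Fin d, LinearMap.range (Mz i : HK →ₗ[ℂ] HK) with hRpre
  set R1c : Submodule ℂ HK := Rpre.topologicalClosure with hR1c
  have hR1cl : IsClosed (R1c : Set HK) := Submodule.isClosed_topologicalClosure _
  haveI : CompleteSpace R1c := hR1cl.completeSpace_coe
  haveI : CompleteSpace Msub := hMcl.completeSpace_coe
  set P : HK →L[ℂ] HK := Msub.subtypeL.comp (Submodule.orthogonalProjection Msub) with hP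
  set Q : HK →L[ℂ] HK := R1c.subtypeL.comp (Submodule.orthogonalProjection R1c) with hQ
  have hPapp : ∀ u, P u = (Submodule.orthogonalProjection Msub u : HK) := fun u => rfl
  have hQapp : ∀ u, Q u = (Submodule.orthogonalProjection R1c u : HK) := fun u => rfl
  have hPmem : ∀ u, P u ∈ Msub := fun u => (Submodule.orthogonalProjection Msub u).2
  have hQmem : ∀ u, Q u ∈ R1c := fun u => (Submodule.orthogonalProjection R1c u).2
  have hPfix : ∀ u, u ∈ Msub → P u = u := by
    intro u hu
    have h2 := Submodule.orthogonalProjection_mem_subspace_eq_self (K := Msub) ⟨u, hu⟩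
    rw [hPapp]
    exact congrArg Subtype.val h2
  have hQfix : ∀ u, u ∈ R1c → Q u = u := by
    intro u hu
    have h2 := Submodule.orthogonalProjection_mem_subspace_eq_self (K := R1c) ⟨u, hu⟩
    rw [hQapp]
    exact congrArg Subtype.val h2
  have hPorth : ∀ u, u - P u ∈ Msubᗮ := fun u => Submodule.sub_starProjection_mem_orthogonal (K := Msub) u
  have hQorth : ∀ u, u - Q u ∈ R1cᗮ := fun u => Submodule.sub_starProjection_mem_orthogonal (K := R1c) u
  have hPzero : ∀ u, u ∈ Msubᗮ → P u = 0 := by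
    intro u hu
    rw [hPapp, Submodule.orthogonalProjection_mem_subspace_orthogonalComplement_eq_zero hu]
    rfl
  have hQzero : ∀ u, u ∈ R1cᗮ → Q u = 0 := by
    intro u hu
    rw [hQapp, Submodule.orthogonalProjection_mem_subspace_orthogonalComplement_eq_zero hu]
    rfl
  have hPsa : ∀ u w', ⟪P u, w'⟫_ℂ = ⟪u, P w'⟫_ℂ := fun u w' =>
    Submodule.inner_starProjection_left_eq_right (K := Msub) u w'
  have hMzmem : ∀ i u, u ∈ Msub → Mz i u ∈ Msub := fun i u hu =>
    (hred i).1 (Submodule.mem_map_of_mem hu)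
  have hMzadj : ∀ i u, u ∈ Msub → (Mz i).adjoint u ∈ Msub := fun i u hu =>
    (hred i).2 (Submodule.mem_map_of_mem hu)
  have horthMz : ∀ i u, u ∈ Msubᗮ → Mz i u ∈ Msubᗮ := by
    intro i u hu
    rw [Submodule.mem_orthogonal]
    intro m hm
    have h1 : ⟪u, (Mz i).adjoint m⟫_ℂ = ⟪Mz i u, m⟫_ℂ :=
      ContinuousLinearMap.adjoint_inner_right (Mz i) u m
    have h2 : ⟪u, (Mz i).adjoint m⟫_ℂ = 0 :=
      Submodule.inner_left_of_mem_orthogonal (hMzadj i m hm) hu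
    have h3 : ⟪Mz i u, m⟫_ℂ = 0 := by rw [← h1]; exact h2
    rw [← inner_conj_symm, h3, map_zero]
  have hPMz : ∀ i u, P (Mz i u) = Mz i (P u) := by
    intro i u
    have hdecomp : Mz i u = Mz i (P u) + Mz i (u - P u) := by
      rw [← map_add]
      congr 1
      abel
    rw [hdecomp, map_add, hPfix _ (hMzmem i _ (hPmem u)), hPzero _ (horthMz i _ (hPorth u)),
      add_zero]
  have hPR1 : ∀ r, r ∈ R1c → P r ∈ R1c := by
    have hpre : ∀ s ∈ Rpre, P s ∈ Rpre := by
      intro s hs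
      refine Submodule.iSup_induction (motive := fun y => P y ∈ Rpre) _ hs ?_ ?_ ?_
      · rintro i y hy
        obtain ⟨g, rfl⟩ := hy
        show P (Mz i g) ∈ Rpre
        rw [hPMz]
        exact Submodule.mem_iSup_of_mem i (LinearMap.mem_range_self _ _)
      · show P 0 ∈ Rpre
        rw [map_zero]
        exact Rpre.zero_mem
      · intro y1 y2 h1 h2
        show P (y1 + y2) ∈ Rpre
        rw [map_add]
        exact Rpre.add_mem h1 h2
    intro r hr
    have hrc : r ∈ closure (Rpre : Set HK) := by
      rw [← Submodule.topologicalClosure_coe]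
      exact hr
    have h1 : P r ∈ closure (P '' (Rpre : Set HK)) :=
      image_closure_subset_closure_image P.continuous ⟨r, hrc, rfl⟩
    have hsub : closure (P '' (Rpre : Set HK)) ⊆ closure (Rpre : Set HK) := by
      apply closure_mono
      rintro _ ⟨s, hs, rfl⟩
      exact hpre s hs
    have h2 : P r ∈ closure (Rpre : Set HK) := hsub h1
    rw [← SetLike.mem_coe, Submodule.topologicalClosure_coe] at *
    exact h2
  have hPR1o : ∀ f, f ∈ R1cᗮ → P f ∈ R1cᗮ := by
    intro f hf
    rw [Submodule.mem_orthogonal]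
    intro r hr
    rw [← hPsa r f]
    exact Submodule.inner_right_of_mem_orthogonal (hPR1 r hr) hf
  have hQP : ∀ u, Q (P u) = P (Q u) := by
    intro u
    have hu : P u = P (Q u) + P (u - Q u) := by
      rw [← map_add]
      congr 1
      abel
    rw [hu, map_add, hQfix _ (hPR1 _ (hQmem u)), hQzero _ (hPR1o _ (hQorth u)), add_zero]
  set X : HK := v - Q v with hX
  have hQvMsub : Q v ∈ Msub := by
    have h1 : Q v = P (Q v) := by
      conv_lhs => rw [← hPfix v hv]
      rw [hQP]
    rw [h1]
    exact hPmem _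
  have hXmem : X ∈ Msub := Msub.sub_mem hv hQvMsub
  have hXorth : X ∈ R1cᗮ := hQorth v
  have hev0R1 : ∀ r, r ∈ R1c → ev (0 : EuclideanSpace ℂ (Fin d)) r = 0 := by
    have hker : R1c ≤ LinearMap.ker (ev (0 : EuclideanSpace ℂ (Fin d)) : HK →ₗ[ℂ] 𝒟) := by
      apply Submodule.topologicalClosure_minimal
      · apply iSup_le
        rintro i x ⟨g, rfl⟩
        rw [LinearMap.mem_ker]
        show ev (0 : EuclideanSpace ℂ (Fin d)) (Mz i g) = 0
        rw [hMz i 0 h0n g]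
        show (0 : EuclideanSpace ℂ (Fin d)) i • ev (0 : EuclideanSpace ℂ (Fin d)) g = 0
        simp
      · exact ContinuousLinearMap.isClosed_ker _
    intro r hr
    exact LinearMap.mem_ker.mp (hker hr)
  have hev0X : ev (0 : EuclideanSpace ℂ (Fin d)) X = ev (0 : EuclideanSpace ℂ (Fin d)) v := by
    rw [hX, map_sub, hev0R1 _ (hQmem v), sub_zero]
  have hMbR1 : ∀ (w : EuclideanSpace ℂ (Fin d)) (y : HK), Mb Mz w y ∈ Rpre := by
    intro w y
    rw [Mb, ContinuousLinearMap.sum_apply]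
    apply Submodule.sum_mem
    intro i _
    rw [ContinuousLinearMap.smul_apply]
    exact Submodule.smul_mem _ _ (Submodule.mem_iSup_of_mem i (LinearMap.mem_range_self _ _))
  have htail : ∀ w : EuclideanSpace ℂ (Fin d), ‖w‖ < δ → ∀ x : 𝒟,
      (ev w).adjoint x - (ev (0 : EuclideanSpace ℂ (Fin d))).adjoint x ∈ R1c := by
    intro w hw x
    have hHS := kv_expand a ev Mz ha0 hapos hsep hkernel hMz w (hw.trans hδ1) x (hsumδ w hw)
    set f : ℕ → HK :=
      fun n => (a n : ℂ) • ((Mb Mz w ^ n) ((ev (0 : EuclideanSpace ℂ (Fin d))).adjoint x))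
      with hfdef
    have hf0 : f 0 = (ev (0 : EuclideanSpace ℂ (Fin d))).adjoint x := by
      rw [hfdef]
      simp [ha0]
    have h3 : HasSum (fun n => f (n + 1))
        ((ev w).adjoint x - (ev (0 : EuclideanSpace ℂ (Fin d))).adjoint x) := by
      apply (hasSum_nat_add_iff (f := f) 1).mpr
      rw [Finset.sum_range_one, hf0, sub_add_cancel]
      exact hHS
    apply hasSum_mem_closed hR1cl h3
    intro n
    apply Submodule.smul_mem
    rw [pow_succ', ContinuousLinearMap.mul_apply]
    exact Rpre.le_topologicalClosure (hMbR1 w _)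
  have hevwX : ∀ w : EuclideanSpace ℂ (Fin d), ‖w‖ < δ →
      ev w X = ev (0 : EuclideanSpace ℂ (Fin d)) v := by
    intro w hw
    apply ext_inner_left ℂ
    intro x
    rw [← kv_inner ev w x X]
    have hsplit : (ev w).adjoint x = (ev (0 : EuclideanSpace ℂ (Fin d))).adjoint x
        + ((ev w).adjoint x - (ev (0 : EuclideanSpace ℂ (Fin d))).adjoint x) := by
      abel
    rw [hsplit, inner_add_left,
      Submodule.inner_right_of_mem_orthogonal (htail w hw x) hXorth, add_zero,
      kv_inner ev 0 x X, hev0X]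
  set Z : HK := X - (ev (0 : EuclideanSpace ℂ (Fin d))).adjoint
    (ev (0 : EuclideanSpace ℂ (Fin d)) v) with hZ
  have hZ0 : ∀ w : EuclideanSpace ℂ (Fin d), ‖w‖ < δ → ev w Z = 0 := by
    intro w hw
    rw [hZ, map_sub, hevwX w hw,
      ev_kv_zero a ev ha0 hkernel w (hw.trans hδ1) (ev (0 : EuclideanSpace ℂ (Fin d)) v),
      sub_self]
  have hZall := analytic_ext a ev ha0 hapos hsep hkernel x0 hx0 hδ0 Z hZ0
  have hZzero : Z = 0 := hsep Z hZall
  have hXeq : X = (ev (0 : EuclideanSpace ℂ (Fin d))).adjoint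
      (ev (0 : EuclideanSpace ℂ (Fin d)) v) := by
    rw [hZ] at hZzero
    rwa [sub_eq_zero] at hZzero
  rw [← hXeq]
  exact hXmem

end Stmt16Aux

/-- the canonical K-dilation `j` of a pure K-contraction `T` is
minimal: the only closed subspace of `H_K(𝒟)` reducing for `M_z` and containing `Im j`
is `H_K(𝒟)` itself. -/
theorem stmt16 {d : ℕ} {𝒟 HK H : Type*}
    [NormedAddCommGroup 𝒟] [InnerProductSpace ℂ 𝒟] [CompleteSpace 𝒟]
    [NormedAddCommGroup HK] [InnerProductSpace ℂ HK] [CompleteSpace HK]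
    [NormedAddCommGroup H] [InnerProductSpace ℂ H] [CompleteSpace H]
    (a : ℕ → ℝ) (ha0 : a 0 = 1) (hapos : ∀ n, 0 < a n)
    (m M' : ℝ) (hm : 0 < m) (hbd : ∀ n, m ≤ a n / a (n + 1) ∧ a n / a (n + 1) ≤ M')
    (ev : EuclideanSpace ℂ (Fin d) → (HK →L[ℂ] 𝒟))
    (hsep : ∀ f : HK, (∀ z, ‖z‖ < 1 → ev z f = 0) → f = 0)
    (hkernel : ∀ z w : EuclideanSpace ℂ (Fin d), ‖z‖ < 1 → ‖w‖ < 1 → ∀ x : 𝒟,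
      HasSum (fun n => ((a n : ℂ) * ⟪w, z⟫_ℂ ^ n) • x) (ev z ((ev w).adjoint x)))
    (Mz : Fin d → HK →L[ℂ] HK)
    (hMz : ∀ (i) (z), ‖z‖ < 1 → ∀ f, ev z (Mz i f) = z i • ev z f)
    -- T is a pure K-contraction
    (T : Fin d → H →L[ℂ] H) (hT : ∀ i j, Commute (T i) (T j))
    (c : ℕ → ℝ) (hc0 : c 0 = 1)
    (hcauchy : ∀ n, 1 ≤ n → ∑ j ∈ Finset.range (n + 1), a j * c (n - j) = 0)
    (σit : (H →L[ℂ] H) → ℕ → (H →L[ℂ] H))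
    (hσ0 : ∀ X, σit X 0 = X)
    (hσs : ∀ X n, σit X (n + 1) = ∑ i, T i ∘L σit X n ∘L (T i).adjoint)
    (D0 : H →L[ℂ] H) (hD0pos : D0.IsPositive)
    (hD0 : ∀ x : H, HasSum (fun n => ((c n : ℝ) : ℂ) • σit 1 n x) (D0 x))
    (hpure : ∀ x : H, Tendsto (fun N => ∑ n ∈ Finset.range N, ((a n : ℝ) : ℂ) • σit D0 n x)
      atTop (𝓝 x))
    (C : H →L[ℂ] 𝒟) (hCC : C.adjoint ∘L C = D0) (hCdense : DenseRange C)
    -- the canonical K-dilation j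
    (j : H →L[ℂ] HK) (hjiso : ∀ h, ‖j h‖ = ‖h‖)
    (hj : ∀ (h : H) (z), ‖z‖ < 1 →
      HasSum (fun n => ((a n : ℝ) : ℂ) • C (((∑ i, z i • (T i).adjoint) ^ n) h))
        (ev z (j h)))
    (hjint : ∀ i, j ∘L (T i).adjoint = (Mz i).adjoint ∘L j) :
    -- minimality: the only closed M_z-reducing subspace containing Im j is H_K(𝒟)
    ∀ Msub : Submodule ℂ HK, IsClosed (Msub : Set HK) →
      (∀ i, Submodule.map (Mz i : HK →ₗ[ℂ] HK) Msub ≤ Msub ∧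
        Submodule.map ((Mz i).adjoint : HK →ₗ[ℂ] HK) Msub ≤ Msub) →
      (∀ h : H, j h ∈ Msub) → Msub = ⊤ := by
  intro Msub hMcl hred hjmem
  by_cases htriv : ∀ gg : HK, gg = 0
  · apply Submodule.eq_top_iff'.mpr
    intro x
    rw [htriv x]
    exact Msub.zero_mem
  push_neg at htriv
  obtain ⟨f0, hf0⟩ := htriv
  have hx0ex : ∃ z1 : EuclideanSpace ℂ (Fin d), ‖z1‖ < 1 ∧ ev z1 f0 ≠ 0 := by
    by_contra hc'
    push_neg at hc'
    exact hf0 (hsep f0 (fun z hz => hc' z hz))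
  obtain ⟨z1, hz1, hx0⟩ := hx0ex
  set x0 : 𝒟 := ev z1 f0 with hx0def
  set κ : ℝ := ∑ i, ‖Mz i‖ with hκdef
  have hκ0 : 0 ≤ κ := Finset.sum_nonneg fun i _ => norm_nonneg _
  set δ : ℝ := (2 * (1 + κ))⁻¹ with hδdef
  have hδ0 : 0 < δ := by positivity
  have hδ1 : δ < 1 := by
    rw [hδdef]
    rw [inv_lt_one_iff₀]
    right
    nlinarith
  have hκδ : κ * δ < 1 := by
    rw [hδdef, mul_inv_lt_iff₀ (by positivity)]
    nlinarith
  have hsumδ : ∀ w : EuclideanSpace ℂ (Fin d), ‖w‖ < δ →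
      Summable (fun n => a n * (κ * ‖w‖) ^ n) := by
    intro w hw
    rcases eq_or_ne w 0 with rfl | hwne
    · apply summable_of_ne_finset_zero (s := {0})
      intro n hn
      rw [norm_zero, mul_zero, zero_pow (by simpa using hn), mul_zero]
    · apply Stmt16Aux.summable_pow a ev hapos hkernel x0 hx0 w hwne (by positivity)
      calc κ * ‖w‖ ≤ κ * δ := mul_le_mul_of_nonneg_left hw.le hκ0
        _ < 1 := hκδ
  have hev0j : ∀ h : H, ev (0 : EuclideanSpace ℂ (Fin d)) (j h) = C h := by
    intro h
    have hz : ‖(0 : EuclideanSpace ℂ (Fin d))‖ < 1 := by simpa using one_pos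
    have h1 := hj h 0 hz
    have hA : (∑ i, (0 : EuclideanSpace ℂ (Fin d)) i • (T i).adjoint) = (0 : H →L[ℂ] H) := by
      apply Finset.sum_eq_zero
      intro i _
      show (0 : EuclideanSpace ℂ (Fin d)) i • (T i).adjoint = 0
      have : (0 : EuclideanSpace ℂ (Fin d)) i = 0 := rfl
      rw [this, zero_smul]
    rw [hA] at h1
    have h2 : HasSum (fun n => ((a n : ℝ) : ℂ) • C (((0 : H →L[ℂ] H) ^ n) h)) (C h) := by
      have hs := hasSum_single (f := fun n => ((a n : ℝ) : ℂ) • C (((0 : H →L[ℂ] H) ^ n) h)) 0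
        (by
          intro n hn
          show ((a n : ℝ) : ℂ) • C (((0 : H →L[ℂ] H) ^ n) h) = 0
          rw [zero_pow hn]
          simp)
      simpa [ha0] using hs
    exact h1.unique h2
  have hconstC : ∀ h : H,
      (ev (0 : EuclideanSpace ℂ (Fin d))).adjoint (C h) ∈ Msub := by
    intro h
    have h1 := Stmt16Aux.const_mem a ev Mz ha0 hapos hsep hkernel hMz x0 hx0 hδ0 hδ1 hsumδ Msub hMcl hred
      (j h) (hjmem h)
    rwa [hev0j h] at h1
  have hconst : ∀ x : 𝒟, (ev (0 : EuclideanSpace ℂ (Fin d))).adjoint x ∈ Msub := by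
    intro x
    have hx : x ∈ closure (Set.range C) := hCdense x
    have hcl : IsClosed {y : 𝒟 | (ev (0 : EuclideanSpace ℂ (Fin d))).adjoint y ∈ Msub} :=
      IsClosed.preimage (ContinuousLinearMap.continuous _) hMcl
    have hsubset : Set.range C ⊆ {y : 𝒟 | (ev (0 : EuclideanSpace ℂ (Fin d))).adjoint y ∈ Msub} := by
      rintro _ ⟨h, rfl⟩
      exact hconstC h
    exact closure_minimal hsubset hcl hx
  have hkmem : ∀ w : EuclideanSpace ℂ (Fin d), ‖w‖ < δ → ∀ x : 𝒟,
      (ev w).adjoint x ∈ Msub := by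
    intro w hw x
    have hHS := Stmt16Aux.kv_expand a ev Mz ha0 hapos hsep hkernel hMz w (hw.trans hδ1) x (hsumδ w hw)
    apply Stmt16Aux.hasSum_mem_closed hMcl hHS
    intro n
    apply Submodule.smul_mem
    induction n with
    | zero =>
      simpa using hconst x
    | succ n ih =>
      rw [pow_succ', ContinuousLinearMap.mul_apply]
      rw [Stmt16Aux.Mb, ContinuousLinearMap.sum_apply]
      apply Submodule.sum_mem
      intro i _
      rw [ContinuousLinearMap.smul_apply]
      exact Submodule.smul_mem _ _ ((hred i).1 (Submodule.mem_map_of_mem ih))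
  haveI : CompleteSpace Msub := hMcl.completeSpace_coe
  rw [← Submodule.orthogonal_eq_bot_iff]
  rw [Submodule.eq_bot_iff]
  intro f hf
  apply hsep
  apply Stmt16Aux.analytic_ext a ev ha0 hapos hsep hkernel x0 hx0 hδ0
  intro w hw
  apply ext_inner_left ℂ
  intro y
  rw [inner_zero_right, ← Stmt16Aux.kv_inner ev w y f]
  exact Submodule.inner_right_of_mem_orthogonal (hkmem w hw y) hf
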